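/- Let H be a hypergraph with at least one edge. Then the treewidth of H satisfies tw(H) + 1 ≤ rank(H) · subw(H), where rank(H) is the maximum edge size and subw(H) is the submodular width of H. Consequently tw(H) ≤ rank(H) · subw(H). -/

import Mathlib

open scoped ENNReal

/-- A tree decomposition of the finite hypergraph with vertex type `V` and edge set `E`. -/
structure TreeDecomp (V : Type) [Fintype V] [DecidableEq V] (E : Finset (Finset V)) where
  τ : Type
  T : SimpleGraph τ
  tree : T.IsTree
  B : τ → Finset V
  cover : ∀ e ∈ E, ∃ u : τ, e ⊆ B u
  conn : ∀ v : V, (T.induce {u : τ | v ∈ B u}).Preconnected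

/-- The `f`-width of a hypergraph: minimal (infimum) over tree decompositions of the
supremum of `f` over the bags. -/
noncomputable def fWidth (V : Type) [Fintype V] [DecidableEq V] (E : Finset (Finset V))
    (f : Finset V → ℝ≥0∞) : ℝ≥0∞ :=
  ⨅ D : TreeDecomp V E, ⨆ u : D.τ, f (D.B u)

/-- Treewidth (as an extended real), via the width function `c(X) = |X| - 1`. -/
noncomputable def twE (V : Type) [Fintype V] [DecidableEq V] (E : Finset (Finset V)) : ℝ≥0∞ :=
  fWidth V E (fun X => (X.card : ℝ≥0∞) - 1)

/-- Submodular width: supremum of the `b`-widths over all monotone, edge-dominated,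
submodular `b` with `b ∅ = 0`. -/
noncomputable def subwE (V : Type) [Fintype V] [DecidableEq V] (E : Finset (Finset V)) : ℝ≥0∞ :=
  ⨆ b ∈ {b : Finset V → ℝ≥0∞ |
      (∀ X Y : Finset V, X ⊆ Y → b X ≤ b Y) ∧
      (∀ e ∈ E, b e ≤ 1) ∧
      (∀ X Y : Finset V, b (X ∩ Y) + b (X ∪ Y) ≤ b X + b Y) ∧
      b ∅ = 0},
    fWidth V E b

/-- For a hypergraph `H` with at least one edge (edges being nonempty),
`tw(H) + 1 ≤ rank(H) · subw(H)`, and consequently `tw(H) ≤ rank(H) · subw(H)`. -/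
theorem stmt_7 (V : Type) [Fintype V] [DecidableEq V] (E : Finset (Finset V))
    (hEne : E.Nonempty) (hne : ∀ e ∈ E, e.Nonempty)
    (rank : ℕ) (hrank : rank = (E.image Finset.card).max' (hEne.image _)) :
    twE V E + 1 ≤ (rank : ℝ≥0∞) * subwE V E ∧
    twE V E ≤ (rank : ℝ≥0∞) * subwE V E := by
  -- basic facts about rank
  obtain ⟨e₀, he₀⟩ := hEne
  have hcard_le : ∀ e ∈ E, e.card ≤ rank := by
    intro e he
    rw [hrank]
    exact Finset.le_max' _ _ (Finset.mem_image_of_mem _ he)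
  have hrank1 : 1 ≤ rank := le_trans (Finset.card_pos.2 (hne e₀ he₀)) (hcard_le e₀ he₀)
  have hr0 : (rank : ℝ≥0∞) ≠ 0 := by exact_mod_cast Nat.one_le_iff_ne_zero.mp hrank1
  have hrt : (rank : ℝ≥0∞) ≠ ∞ := ENNReal.natCast_ne_top rank
  -- the witness function
  set b : Finset V → ℝ≥0∞ := fun X => (X.card : ℝ≥0∞) / rank with hb
  have hbmem : b ∈ {b : Finset V → ℝ≥0∞ |
      (∀ X Y : Finset V, X ⊆ Y → b X ≤ b Y) ∧
      (∀ e ∈ E, b e ≤ 1) ∧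
      (∀ X Y : Finset V, b (X ∩ Y) + b (X ∪ Y) ≤ b X + b Y) ∧
      b ∅ = 0} := by
    refine ⟨?_, ?_, ?_, ?_⟩
    · intro X Y hXY
      exact ENNReal.div_le_div_right (by exact_mod_cast Finset.card_le_card hXY) _
    · intro e he
      rw [hb]
      apply ENNReal.div_le_of_le_mul
      rw [one_mul]
      exact_mod_cast hcard_le e he
    · intro X Y
      rw [hb]
      simp only [ENNReal.div_add_div_same]
      apply ENNReal.div_le_div_right
      rw [← Nat.cast_add, ← Nat.cast_add]
      exact_mod_cast le_of_eq (Finset.card_inter_add_card_union X Y)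
    · simp [hb]
  -- key: for each decomposition, tw + 1 ≤ sup of bag sizes
  have key : ∀ D : TreeDecomp V E, twE V E + 1 ≤ ⨆ u : D.τ, ((D.B u).card : ℝ≥0∞) := by
    intro D
    set S := ⨆ u : D.τ, ((D.B u).card : ℝ≥0∞) with hS
    have hS1 : 1 ≤ S := by
      obtain ⟨u, hu⟩ := D.cover e₀ he₀
      have : (1 : ℝ≥0∞) ≤ ((D.B u).card : ℝ≥0∞) := by
        exact_mod_cast Finset.card_pos.2 ((hne e₀ he₀).mono hu)
      exact this.trans (le_iSup (fun u => ((D.B u).card : ℝ≥0∞)) u)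
    have htw : twE V E ≤ S - 1 := by
      refine (iInf_le _ D).trans ?_
      refine iSup_le fun u => ?_
      exact tsub_le_tsub_right (le_iSup (fun u => ((D.B u).card : ℝ≥0∞)) u) 1
    calc twE V E + 1 ≤ (S - 1) + 1 := add_le_add_left htw 1
      _ = S := tsub_add_cancel_of_le hS1
  -- main inequality
  have main : twE V E + 1 ≤ (rank : ℝ≥0∞) * subwE V E := by
    have h1 : fWidth V E b ≤ subwE V E := le_iSup₂ (f := fun b _ => fWidth V E b) b hbmem
    refine le_trans ?_ (mul_le_mul_right h1 _)
    rw [← mul_comm, ← ENNReal.div_le_iff_le_mul (Or.inl hr0) (Or.inl hrt)]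
    refine le_iInf fun D => ?_
    have : (⨆ u : D.τ, b (D.B u)) = (⨆ u : D.τ, ((D.B u).card : ℝ≥0∞)) / rank := by
      rw [hb, ENNReal.iSup_div]
    rw [this]
    exact ENNReal.div_le_div_right (key D) _
  exact ⟨main, le_trans le_self_add main⟩
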